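/- Complete growth series of a direct product: Let G and H be groups with finite symmetric generating sets S and T respectively, and equip G × H with the finite symmetric generating set S' = (S × {1}) ∪ ({1} × T). Then CG_{G×H,S'}(z) = ι_G(CG_{G,S}(z)) · ι_H(CG_{H,T}(z)) in the power series ring (ℤ[G×H])[[z]], where ι_G and ι_H denote the maps on power series induced coefficientwise by the ring homomorphisms ℤ[G] → ℤ[G×H] and ℤ[H] → ℤ[G×H] coming from the inclusions g ↦ (g,1) and h ↦ (1,h). -/

import Mathlib

/-- The word norm of `g` with respect to a generating set `S`. -/
noncomputable def wordNorm {G : Type*} [Group G] (S : Set G) (g : G) : ℕ :=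
  sInf {n | ∃ l : List G, (∀ s ∈ l, s ∈ S) ∧ l.length = n ∧ l.prod = g}

section Aux
variable {G : Type*} [Group G] {S : Set G}

lemma exists_word (hSsym : S⁻¹ = S) (hSgen : Subgroup.closure S = ⊤) (g : G) :
    ∃ l : List G, (∀ s ∈ l, s ∈ S) ∧ l.prod = g := by
  have hg : g ∈ (Subgroup.closure S).toSubmonoid := by
    rw [hSgen]; trivial
  rw [Subgroup.closure_toSubmonoid, hSsym, Set.union_self] at hg
  exact Submonoid.exists_list_of_mem_closure hg

lemma wordNorm_le {g : G} {l : List G} (hl : ∀ s ∈ l, s ∈ S) (hp : l.prod = g) :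
    wordNorm S g ≤ l.length :=
  Nat.sInf_le ⟨l, hl, rfl, hp⟩

lemma wordNorm_spec (hSsym : S⁻¹ = S) (hSgen : Subgroup.closure S = ⊤) (g : G) :
    ∃ l : List G, (∀ s ∈ l, s ∈ S) ∧ l.length = wordNorm S g ∧ l.prod = g := by
  have hne : {n | ∃ l : List G, (∀ s ∈ l, s ∈ S) ∧ l.length = n ∧ l.prod = g}.Nonempty := by
    obtain ⟨l, hl, hp⟩ := exists_word hSsym hSgen g
    exact ⟨l.length, l, hl, rfl, hp⟩
  exact Nat.sInf_mem hne

lemma wordNorm_one : wordNorm S (1 : G) = 0 :=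
  Nat.le_zero.mp (wordNorm_le (l := []) (by simp) (by simp))

lemma wordNorm_mul_le (hSsym : S⁻¹ = S) (hSgen : Subgroup.closure S = ⊤)
    {s : G} (hs : s ∈ S) (g : G) : wordNorm S (s * g) ≤ wordNorm S g + 1 := by
  obtain ⟨l, hl, hlen, hp⟩ := wordNorm_spec hSsym hSgen g
  have := wordNorm_le (g := s * g) (l := s :: l)
    (by simpa using ⟨hs, hl⟩) (by simp [hp])
  simpa [hlen, Nat.add_comm] using this

lemma finite_wordNorm_eq (hSfin : S.Finite) (hSsym : S⁻¹ = S)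
    (hSgen : Subgroup.closure S = ⊤) (n : ℕ) :
    {g : G | wordNorm S g = n}.Finite := by
  classical
  have : Finite S := hSfin
  have hfin : {l : List S | l.length = n}.Finite := List.finite_length_eq S n
  apply Set.Finite.subset (hfin.image (fun l => (l.map Subtype.val).prod))
  intro g hg
  obtain ⟨l, hl, hlen, hp⟩ := wordNorm_spec hSsym hSgen g
  refine ⟨l.attach.map (fun x => ⟨x.1, hl x.1 x.2⟩), by simpa using hlen.trans hg, ?_⟩
  simp only [List.map_map]
  rw [show (Subtype.val ∘ fun x : {x // x ∈ l} => (⟨x.1, hl x.1 x.2⟩ : S)) = Subtype.val from rfl]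
  simpa [List.attach_map_val] using hp

end Aux

section ProdAux
variable {G H : Type*} [Group G] [Group H] {S : Set G} {T : Set H}

lemma image_inv_of_symm {M N : Type*} [Group M] [Group N] (f : M →* N) (A : Set M)
    (hA : A⁻¹ = A) : (f '' A)⁻¹ = f '' A := by
  ext x
  simp only [Set.mem_inv, Set.mem_image]
  constructor
  · rintro ⟨s, hs, heq⟩
    refine ⟨s⁻¹, by rw [← hA]; simpa using hs, ?_⟩
    rw [map_inv, heq, inv_inv]
  · rintro ⟨s, hs, rfl⟩
    exact ⟨s⁻¹, by rw [← hA]; simpa using hs, by rw [map_inv]⟩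

lemma prodGen_sym (hSsym : S⁻¹ = S) (hTsym : T⁻¹ = T) :
    ((MonoidHom.inl G H) '' S ∪ (MonoidHom.inr G H) '' T)⁻¹
      = (MonoidHom.inl G H) '' S ∪ (MonoidHom.inr G H) '' T := by
  rw [Set.union_inv, image_inv_of_symm _ _ hSsym, image_inv_of_symm _ _ hTsym]

lemma prodGen_gen (hSgen : Subgroup.closure S = ⊤) (hTgen : Subgroup.closure T = ⊤) :
    Subgroup.closure ((MonoidHom.inl G H) '' S ∪ (MonoidHom.inr G H) '' T) = ⊤ := by
  rw [Subgroup.closure_union, ← MonoidHom.map_closure, ← MonoidHom.map_closure, hSgen, hTgen]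
  ext ⟨g, h⟩
  simp only [Subgroup.mem_top, iff_true]
  have h1 : (g, h) = (MonoidHom.inl G H) g * (MonoidHom.inr G H) h := by
    simp [Prod.ext_iff]
  rw [h1]
  exact Subgroup.mul_mem_sup ⟨g, Subgroup.mem_top g, rfl⟩ ⟨h, Subgroup.mem_top h, rfl⟩

lemma wordNorm_prod (hSsym : S⁻¹ = S) (hTsym : T⁻¹ = T)
    (hSgen : Subgroup.closure S = ⊤) (hTgen : Subgroup.closure T = ⊤) (g : G) (h : H) :
    wordNorm ((MonoidHom.inl G H) '' S ∪ (MonoidHom.inr G H) '' T) (g, h)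
      = wordNorm S g + wordNorm T h := by
  set S' := (MonoidHom.inl G H) '' S ∪ (MonoidHom.inr G H) '' T with hS'
  apply le_antisymm
  · obtain ⟨l₁, hl₁, hlen₁, hp₁⟩ := wordNorm_spec hSsym hSgen g
    obtain ⟨l₂, hl₂, hlen₂, hp₂⟩ := wordNorm_spec hTsym hTgen h
    have := wordNorm_le (S := S') (g := (g, h))
      (l := l₁.map (MonoidHom.inl G H) ++ l₂.map (MonoidHom.inr G H)) ?_ ?_
    · simpa [hlen₁, hlen₂] using this
    · intro x hx
      rcases List.mem_append.mp hx with hx | hx <;> rcases List.mem_map.mp hx with ⟨s, hs, rfl⟩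
      · exact Or.inl ⟨s, hl₁ s hs, rfl⟩
      · exact Or.inr ⟨s, hl₂ s hs, rfl⟩
    · rw [List.prod_append, ← map_list_prod, ← map_list_prod, hp₁, hp₂]
      simp [Prod.ext_iff]
  · have key : ∀ l : List (G × H), (∀ x ∈ l, x ∈ S') →
        wordNorm S l.prod.1 + wordNorm T l.prod.2 ≤ l.length := by
      intro l
      induction l with
      | nil => simp [wordNorm_one]
      | cons x l ih =>
        intro hx
        have hl := ih (fun y hy => hx y (List.mem_cons_of_mem x hy))
        rcases hx x List.mem_cons_self with ⟨s, hs, rfl⟩ | ⟨t, ht, rfl⟩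
        · have h1 : wordNorm S (s * l.prod.1) ≤ wordNorm S l.prod.1 + 1 :=
            wordNorm_mul_le hSsym hSgen hs _
          simp only [List.prod_cons, List.length_cons]
          have : ((MonoidHom.inl G H) s * l.prod).1 = s * l.prod.1 := rfl
          have h2 : ((MonoidHom.inl G H) s * l.prod).2 = l.prod.2 := by simp
          rw [this, h2]; omega
        · have h1 : wordNorm T (t * l.prod.2) ≤ wordNorm T l.prod.2 + 1 :=
            wordNorm_mul_le hTsym hTgen ht _
          simp only [List.prod_cons, List.length_cons]
          have h2 : ((MonoidHom.inr G H) t * l.prod).1 = l.prod.1 := by simp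
          have : ((MonoidHom.inr G H) t * l.prod).2 = t * l.prod.2 := rfl
          rw [this, h2]; omega
    obtain ⟨l, hl, hlen, hp⟩ := wordNorm_spec (prodGen_sym hSsym hTsym)
      (prodGen_gen hSgen hTgen) (g, h)
    have := key l hl
    rw [hp] at this
    calc wordNorm S g + wordNorm T h = wordNorm S (g, h).1 + wordNorm T (g, h).2 := rfl
      _ ≤ l.length := this
      _ = _ := hlen

end ProdAux

lemma mapDomainRingHom_of {M N : Type*} [Monoid M] [Monoid N] (f : M →* N) (g : M) :
    (MonoidAlgebra.mapDomainRingHom ℤ f) (MonoidAlgebra.of ℤ M g)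
      = MonoidAlgebra.of ℤ N (f g) := by
  simp [MonoidAlgebra.mapDomainRingHom, MonoidAlgebra.of_apply, Finsupp.mapDomain_single]


/-- The complete growth series `CG_{G,S}(z) ∈ (ℤ[G])[[z]]`: the coefficient of `z^n`
is the sum `Σ_{‖g‖_S = n} g` in the group ring `ℤ[G]`. -/
noncomputable def completeGrowthSeries {G : Type*} [Group G] (S : Set G) :
    PowerSeries (MonoidAlgebra ℤ G) :=
  PowerSeries.mk fun n => ∑ᶠ g ∈ {g : G | wordNorm S g = n}, MonoidAlgebra.of ℤ G g

/-- **Complete growth series of a direct product**: for groups `G`, `H` with finite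
symmetric generating sets `S`, `T`, and `G × H` with the generating set
`(S × {1}) ∪ ({1} × T)`, one has `CG_{G×H}(z) = ι_G(CG_G(z)) · ι_H(CG_H(z))`,
where `ι_G`, `ι_H` are induced by the inclusions `G → G × H`, `H → G × H`. -/
theorem completeGrowthSeries_prod {G H : Type*} [Group G] [Group H]
    (S : Set G) (T : Set H)
    (hSfin : S.Finite) (hTfin : T.Finite)
    (hSsym : S⁻¹ = S) (hTsym : T⁻¹ = T)
    (hSgen : Subgroup.closure S = ⊤) (hTgen : Subgroup.closure T = ⊤) :
    completeGrowthSeries ((MonoidHom.inl G H) '' S ∪ (MonoidHom.inr G H) '' T) =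
      PowerSeries.map (MonoidAlgebra.mapDomainRingHom ℤ (MonoidHom.inl G H))
          (completeGrowthSeries S) *
      PowerSeries.map (MonoidAlgebra.mapDomainRingHom ℤ (MonoidHom.inr G H))
          (completeGrowthSeries T) := by
  classical
  have hA : ∀ i, {g : G | wordNorm S g = i}.Finite :=
    fun i => finite_wordNorm_eq hSfin hSsym hSgen i
  have hB : ∀ j, {h : H | wordNorm T h = j}.Finite :=
    fun j => finite_wordNorm_eq hTfin hTsym hTgen j
  have hS'fin : ((MonoidHom.inl G H) '' S ∪ (MonoidHom.inr G H) '' T).Finite :=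
    (hSfin.image _).union (hTfin.image _)
  have hU : ∀ n, {p : G × H |
      wordNorm ((MonoidHom.inl G H) '' S ∪ (MonoidHom.inr G H) '' T) p = n}.Finite :=
    fun n => finite_wordNorm_eq hS'fin (prodGen_sym hSsym hTsym) (prodGen_gen hSgen hTgen) n
  refine PowerSeries.ext fun n => ?_
  rw [PowerSeries.coeff_mul]
  simp only [PowerSeries.coeff_map, completeGrowthSeries, PowerSeries.coeff_mk]
  rw [finsum_mem_eq_finite_toFinset_sum _ (hU n)]
  have hrhs : ∀ p : ℕ × ℕ,
      (MonoidAlgebra.mapDomainRingHom ℤ (MonoidHom.inl G H))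
          (∑ᶠ g ∈ {g : G | wordNorm S g = p.1}, MonoidAlgebra.of ℤ G g) *
        (MonoidAlgebra.mapDomainRingHom ℤ (MonoidHom.inr G H))
          (∑ᶠ h ∈ {h : H | wordNorm T h = p.2}, MonoidAlgebra.of ℤ H h)
      = ∑ x ∈ (hA p.1).toFinset ×ˢ (hB p.2).toFinset,
          MonoidAlgebra.of ℤ (G × H) x := by
    intro p
    rw [finsum_mem_eq_finite_toFinset_sum _ (hA p.1),
      finsum_mem_eq_finite_toFinset_sum _ (hB p.2), map_sum, map_sum,
      Finset.sum_mul_sum, Finset.sum_product]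
    refine Finset.sum_congr rfl fun g _ => Finset.sum_congr rfl fun h _ => ?_
    rw [mapDomainRingHom_of, mapDomainRingHom_of]
    simp only [MonoidAlgebra.of_apply, MonoidAlgebra.single_mul_single, one_mul]
    congr 1
    simp [Prod.ext_iff]
  simp only [hrhs]
  rw [← Finset.sum_biUnion]
  · apply Finset.sum_congr _ (fun _ _ => rfl)
    ext ⟨g, h⟩
    simp only [Set.Finite.mem_toFinset, Set.mem_setOf_eq, Finset.mem_biUnion,
      Finset.mem_product, Finset.HasAntidiagonal.mem_antidiagonal]
    rw [wordNorm_prod hSsym hTsym hSgen hTgen]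
    constructor
    · rintro rfl
      exact ⟨(wordNorm S g, wordNorm T h), rfl, rfl, rfl⟩
    · rintro ⟨p, hpn, h1, h2⟩
      rw [h1, h2, hpn]
  · intro p hp q hq hpq
    simp only [Finset.disjoint_left]
    rintro ⟨g, h⟩ hmem hmem'
    simp only [Finset.mem_product, Set.Finite.mem_toFinset, Set.mem_setOf_eq] at hmem hmem'
    exact hpq (Prod.ext_iff.mpr ⟨hmem.1.symm.trans hmem'.1, hmem.2.symm.trans hmem'.2⟩)
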